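/- Let V and W be finite-dimensional real vector spaces with dim V = q + 1, q ≥ 3, and let δ : V × V → W be an alternating bilinear map such that the span of its image {δ(x, y) : x, y ∈ V} has dimension q. Let B, B' ⊆ V be q-dimensional subspaces such that δ vanishes identically on B × B and such that every nonzero b' ∈ B' has degree at most 1, i.e. the linear map y ↦ δ(b', y) has rank at most 1. Then B' = B. -/
import Mathlib


/-- linear-algebra content of the uniqueness assertion in Proposition 2.8:
if `dim V = q+1` with `q ≥ 3`, the image of the alternating bilinear map `δ` spans a
`q`-dimensional subspace of `W`, `δ` vanishes on the `q`-dimensional subspace `B`, and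
every nonzero element of the `q`-dimensional subspace `B'` has degree at most `1`,
then `B' = B`. -/
theorem singular_subbundle_unique
    (V W : Type*)
    [AddCommGroup V] [Module ℝ V] [FiniteDimensional ℝ V]
    [AddCommGroup W] [Module ℝ W] [FiniteDimensional ℝ W]
    (q : ℕ) (hq : 3 ≤ q) (hV : Module.finrank ℝ V = q + 1)
    (δ : V →ₗ[ℝ] V →ₗ[ℝ] W)
    (halt : ∀ x : V, δ x x = 0)
    (himage : Module.finrank ℝ
      (Submodule.span ℝ {w : W | ∃ x y : V, w = δ x y}) = q)
    (B B' : Submodule ℝ V)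
    (hB : Module.finrank ℝ B = q) (hB' : Module.finrank ℝ B' = q)
    (hvanish : ∀ b ∈ B, ∀ b'' ∈ B, δ b b'' = 0)
    (hdeg : ∀ b' ∈ B', b' ≠ 0 → Module.finrank ℝ (LinearMap.range (δ b')) ≤ 1) :
    B' = B := by
  -- antisymmetry of δ
  have hanti : ∀ x y : V, δ x y = - δ y x := by
    intro x y
    have h := halt (x + y)
    simp only [map_add, LinearMap.add_apply, halt x, halt y, zero_add, add_zero] at h
    exact eq_neg_of_add_eq_zero_left (by rw [add_comm]; exact h)
  -- first show B' ≤ B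
  have hle : B' ≤ B := by
    intro b' hb'
    by_contra hb'B
    have hb0 : b' ≠ 0 := fun h => hb'B (h ▸ B.zero_mem)
    -- B ⊔ span b' = ⊤
    have hlt : B < B ⊔ (ℝ ∙ b') := by
      refine lt_of_le_of_ne le_sup_left ?_
      intro h
      exact hb'B (h ▸ (le_sup_right : (ℝ ∙ b') ≤ B ⊔ (ℝ ∙ b')) (Submodule.mem_span_singleton_self b'))
    have htop : B ⊔ (ℝ ∙ b') = ⊤ := by
      have h1 : q < Module.finrank ℝ ↥(B ⊔ (ℝ ∙ b')) := hB ▸ Submodule.finrank_lt_finrank_of_lt hlt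
      have h2 : Module.finrank ℝ ↥(B ⊔ (ℝ ∙ b')) ≤ q + 1 := hV ▸ Submodule.finrank_le _
      exact Submodule.eq_top_of_finrank_eq (by omega)
    -- every element of V decomposes as b + s • b'
    have hdecomp : ∀ x : V, ∃ b ∈ B, ∃ s : ℝ, x = b + s • b' := by
      intro x
      have hx : x ∈ B ⊔ (ℝ ∙ b') := htop ▸ Submodule.mem_top
      rcases Submodule.mem_sup.mp hx with ⟨b, hb, z, hz, rfl⟩
      rcases Submodule.mem_span_singleton.mp hz with ⟨s, rfl⟩
      exact ⟨b, hb, s, rfl⟩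
    -- the whole image of δ lies in range (δ b')
    have hspan : Submodule.span ℝ {w : W | ∃ x y : V, w = δ x y} ≤ LinearMap.range (δ b') := by
      rw [Submodule.span_le]
      rintro w ⟨x, y, rfl⟩
      rcases hdecomp x with ⟨b, hb, s, rfl⟩
      rcases hdecomp y with ⟨c, hc, t, rfl⟩
      refine ⟨s • c - t • b, ?_⟩
      simp only [map_add, map_smul, LinearMap.add_apply, LinearMap.smul_apply, map_sub,
        hvanish b hb c hc, halt b', hanti b' b]
      rw [hanti b b']
      module
    have hq' : q ≤ Module.finrank ℝ (LinearMap.range (δ b')) :=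
      himage ▸ Submodule.finrank_mono hspan
    have := hdeg b' hb' hb0
    omega
  -- conclude by equality of dimensions
  exact Submodule.eq_of_le_of_finrank_eq hle (by rw [hB, hB'])
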